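/- arXiv:1411.2848 — 3 statements merged into one kernel-verified Lean document; each statement's English description precedes it below -/
import Mathlib

section
/- For any z, c ∈ ℂ with |c| = 1, |(z^n + c)^n + c| ≤ |c^n + c| + (1 + |z|^n)^n - 1. -/
lemma aux_stmt2 (n : ℕ) (w c : ℂ) (hc : ‖c‖ = 1) :
    ‖(w + c) ^ n - c ^ n‖ ≤ (1 + ‖w‖) ^ n - 1 := by
  have h1 : (w + c) ^ n =
      (∑ k ∈ Finset.range n, w ^ (k+1) * c ^ (n - (k+1)) * (n.choose (k+1) : ℂ)) + c ^ n := by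
    rw [add_pow, Finset.sum_range_succ']
    simp
  have h2 : (1 + ‖w‖) ^ n =
      (∑ k ∈ Finset.range n, ‖w‖ ^ (k+1) * (n.choose (k+1) : ℝ)) + 1 := by
    rw [add_comm, add_pow, Finset.sum_range_succ']
    simp
  rw [h1, add_sub_cancel_right, h2, add_sub_cancel_right]
  refine (norm_sum_le _ _).trans (Finset.sum_le_sum fun k hk => ?_)
  rw [norm_mul, norm_mul, norm_pow, norm_pow, hc, one_pow, mul_one, Complex.norm_natCast]

theorem stmt_2 (n : ℕ) (hn : 0 < n) (z c : ℂ) (hc : ‖c‖ = 1) :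
    ‖(z ^ n + c) ^ n + c‖ ≤
      ‖c ^ n + c‖ + (1 + ‖z‖ ^ n) ^ n - 1 := by
  have h := aux_stmt2 n (z ^ n) c hc
  rw [norm_pow] at h
  calc ‖(z ^ n + c) ^ n + c‖
      = ‖((z ^ n + c) ^ n - c ^ n) + (c ^ n + c)‖ := by ring_nf
    _ ≤ ‖(z ^ n + c) ^ n - c ^ n‖ + ‖c ^ n + c‖ :=
        norm_add_le _ _
    _ ≤ ((1 + ‖z‖ ^ n) ^ n - 1) + ‖c ^ n + c‖ := by linarith
    _ = ‖c ^ n + c‖ + (1 + ‖z‖ ^ n) ^ n - 1 := by ring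
end

section
/- Let c ∈ ℂ with |c| = 1, let 0 < η < 1 and n be a positive integer such that |c^n + c| ≤ η + 1 - (1 + η^n)^n. Then the closed disk of radius η centered at 0 is forward invariant under the second iterate of P_{n,c}(z) = z^n + c, i.e., if |z| ≤ η then |P_{n,c}(P_{n,c}(z))| ≤ η. -/
theorem stmt_5 (c : ℂ) (hc : ‖c‖ = 1) (η : ℝ) (h0 : 0 < η) (h1 : η < 1)
    (n : ℕ) (hn : 0 < n)
    (hineq : ‖c ^ n + c‖ ≤ η + 1 - (1 + η ^ n) ^ n) :
    ∀ z : ℂ, ‖z‖ ≤ η → ‖(z ^ n + c) ^ n + c‖ ≤ η := by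
  intro z hz
  set a : ℂ := z ^ n + c with ha
  have hηn : (0:ℝ) ≤ η ^ n := by positivity
  have hzn : ‖z ^ n‖ ≤ η ^ n := by
    rw [norm_pow]; exact pow_le_pow_left₀ (norm_nonneg z) hz n
  have hab : ‖a‖ ≤ 1 + η ^ n := by
    calc ‖a‖ ≤ ‖z ^ n‖ + ‖c‖ := norm_add_le _ _
    _ ≤ η ^ n + 1 := by rw [hc]; linarith
    _ = 1 + η ^ n := by ring
  have key : ‖a ^ n - c ^ n‖ ≤ (1 + η ^ n) ^ n - 1 := by
    have hfac := geom_sum₂_mul a c n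
    calc ‖a ^ n - c ^ n‖
        = ‖∑ i ∈ Finset.range n, a ^ i * c ^ (n - 1 - i)‖ *
            ‖a - c‖ := by rw [← norm_mul, hfac]
      _ ≤ (∑ i ∈ Finset.range n, (1 + η ^ n) ^ i) * η ^ n := by
          apply mul_le_mul _ _ (norm_nonneg _) (by positivity)
          · calc ‖∑ i ∈ Finset.range n, a ^ i * c ^ (n - 1 - i)‖
                ≤ ∑ i ∈ Finset.range n, ‖a ^ i * c ^ (n - 1 - i)‖ := by
                  exact norm_sum_le _ _
              _ ≤ ∑ i ∈ Finset.range n, (1 + η ^ n) ^ i := by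
                  apply Finset.sum_le_sum
                  intro i _
                  rw [norm_mul, norm_pow, norm_pow, hc, one_pow, mul_one]
                  exact pow_le_pow_left₀ (norm_nonneg a) hab i
          · have : a - c = z ^ n := by rw [ha]; ring
            rw [this]; exact hzn
      _ = (1 + η ^ n) ^ n - 1 := by
          have := geom_sum_mul (1 + η ^ n : ℝ) n
          simp only [add_sub_cancel_left] at this
          exact this
  calc ‖a ^ n + c‖
      = ‖(a ^ n - c ^ n) + (c ^ n + c)‖ := by ring_nf
    _ ≤ ‖a ^ n - c ^ n‖ + ‖c ^ n + c‖ := norm_add_le _ _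
    _ ≤ ((1 + η ^ n) ^ n - 1) + (η + 1 - (1 + η ^ n) ^ n) := add_le_add key hineq
    _ = η := by ring
end

section
/- Let c ∈ ℂ with |c| = 1 and 0 < η < 1. If a positive integer n satisfies |c^n + c| ≤ η + 1 - (1 + η^n)^n, then the orbit of 0 under iteration of P_{n,c}(z) = z^n + c is bounded, with every iterate of any point z with |z| ≤ η having absolute value at most η^n + 1. -/
theorem stmt_6 (c : ℂ) (hc : ‖c‖ = 1) (η : ℝ) (h0 : 0 < η) (h1 : η < 1)
    (n : ℕ) (hn : 0 < n)
    (hineq : ‖c ^ n + c‖ ≤ η + 1 - (1 + η ^ n) ^ n) :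
    (∀ z : ℂ, ‖z‖ ≤ η →
      ∀ k : ℕ, ‖(fun w : ℂ => w ^ n + c)^[k] z‖ ≤ η ^ n + 1) ∧
    (∀ k : ℕ, ‖(fun w : ℂ => w ^ n + c)^[k] 0‖ ≤ η ^ n + 1) := by
  set f : ℂ → ℂ := fun w => w ^ n + c with hf
  have hηn : (0:ℝ) < η ^ n := pow_pos h0 n
  have hone : ∀ w : ℂ, ‖w‖ ≤ η → ‖f w‖ ≤ η ^ n + 1 := by
    intro w hw
    calc ‖w ^ n + c‖ ≤ ‖w ^ n‖ + ‖c‖ :=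
          norm_add_le _ _
      _ = ‖w‖ ^ n + 1 := by rw [norm_pow, hc]
      _ ≤ η ^ n + 1 := by gcongr
  have htwo : ∀ w : ℂ, ‖w‖ ≤ η → ‖f (f w)‖ ≤ η := by
    intro w hw
    set a : ℂ := w ^ n + c with ha
    have haabs : ‖a‖ ≤ η ^ n + 1 := hone w hw
    have hac : ‖a - c‖ ≤ η ^ n := by
      have : a - c = w ^ n := by rw [ha]; ring
      rw [this, norm_pow]
      exact pow_le_pow_left₀ (norm_nonneg w) hw n
    have hsum : ‖∑ i ∈ Finset.range n, a ^ i * c ^ (n - 1 - i)‖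
        ≤ ∑ i ∈ Finset.range n, (η ^ n + 1) ^ i := by
      calc ‖∑ i ∈ Finset.range n, a ^ i * c ^ (n - 1 - i)‖
          ≤ ∑ i ∈ Finset.range n, ‖a ^ i * c ^ (n - 1 - i)‖ := by
            exact norm_sum_le _ _
        _ ≤ ∑ i ∈ Finset.range n, (η ^ n + 1) ^ i := by
            apply Finset.sum_le_sum
            intro i _
            rw [norm_mul, norm_pow, norm_pow, hc, one_pow, mul_one]
            exact pow_le_pow_left₀ (norm_nonneg a) haabs i
    have hkey : ‖a ^ n - c ^ n‖ ≤ (η ^ n + 1) ^ n - 1 := by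
      rw [← geom_sum₂_mul]
      rw [norm_mul]
      have hgeom : (∑ i ∈ Finset.range n, (η ^ n + 1) ^ i) * (η ^ n) = (η ^ n + 1) ^ n - 1 := by
        have := geom_sum_mul (η ^ n + 1 : ℝ) n
        have h2 : (η ^ n + 1 : ℝ) - 1 = η ^ n := by ring
        rw [h2] at this
        exact this
      calc ‖∑ i ∈ Finset.range n, a ^ i * c ^ (n - 1 - i)‖ * ‖a - c‖
          ≤ (∑ i ∈ Finset.range n, (η ^ n + 1) ^ i) * (η ^ n) := by
            apply mul_le_mul hsum hac (norm_nonneg _)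
            apply Finset.sum_nonneg
            intro i _
            positivity
        _ = (η ^ n + 1) ^ n - 1 := hgeom
    have hsplit : f (f w) = (a ^ n - c ^ n) + (c ^ n + c) := by
      show (a ^ n + c) = _
      ring
    have hpow : ((1:ℝ) + η ^ n) ^ n = (η ^ n + 1) ^ n := by ring_nf
    calc ‖f (f w)‖ ≤ ‖a ^ n - c ^ n‖ + ‖c ^ n + c‖ := by
          rw [hsplit]; exact norm_add_le _ _
      _ ≤ ((η ^ n + 1) ^ n - 1) + (η + 1 - (1 + η ^ n) ^ n) := add_le_add hkey hineq
      _ = η := by rw [hpow]; ring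
  have heven : ∀ w : ℂ, ‖w‖ ≤ η → ∀ m : ℕ, ‖f^[2 * m] w‖ ≤ η := by
    intro w hw m
    induction m with
    | zero => simpa using hw
    | succ m ih =>
      have h2 : 2 * (m + 1) = 2 + 2 * m := by ring
      rw [h2, Function.iterate_add_apply]
      have : f^[2] (f^[2 * m] w) = f (f (f^[2 * m] w)) := by
        simp [Function.iterate_succ_apply']
      rw [this]
      exact htwo _ ih
  have main : ∀ z : ℂ, ‖z‖ ≤ η → ∀ k : ℕ, ‖f^[k] z‖ ≤ η ^ n + 1 := by
    intro z hz k
    rcases Nat.even_or_odd k with ⟨m, hm⟩ | ⟨m, hm⟩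
    · have hk : k = 2 * m := by omega
      rw [hk]
      have := heven z hz m
      linarith
    · have hk : k = 2 * m + 1 := by omega
      rw [hk, Function.iterate_succ_apply']
      exact hone _ (heven z hz m)
  refine ⟨main, ?_⟩
  intro k
  exact main 0 (by simp [le_of_lt h0]) k
end
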